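/- Define φ(x) = ∫₀ˣ exp(−t²/2) dt. For all x > 0, x² − 1 + x·exp(−x²/2)/φ(x) ≤ x²·(x² + 2)/(x² + 3). -/

import Mathlib

open Real intervalIntegral

private lemma hasDerivAt_F (y : ℝ) :
    HasDerivAt (fun u : ℝ => (∫ t in (0:ℝ)..u, Real.exp (-t ^ 2 / 2))
        - u * (u ^ 2 + 3) / 3 * Real.exp (-u ^ 2 / 2))
      (y ^ 4 / 3 * Real.exp (-y ^ 2 / 2)) y := by
  have hc : Continuous fun t : ℝ => Real.exp (-t ^ 2 / 2) := by
    continuity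
  have h1 : HasDerivAt (fun u : ℝ => ∫ t in (0:ℝ)..u, Real.exp (-t ^ 2 / 2))
      (Real.exp (-y ^ 2 / 2)) y := by
    exact intervalIntegral.integral_hasDerivAt_right
      (hc.intervalIntegrable 0 y) (hc.stronglyMeasurableAtFilter _ _) hc.continuousAt
  have h2 : HasDerivAt (fun u : ℝ => Real.exp (-u ^ 2 / 2)) (-y * Real.exp (-y ^ 2 / 2)) y := by
    have : HasDerivAt (fun u : ℝ => -u ^ 2 / 2) (-y) y := by
      have := ((hasDerivAt_pow 2 y).neg).div_const 2
      exact this.congr_deriv (by ring)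
    simpa [mul_comm] using this.exp
  have h3 : HasDerivAt (fun u : ℝ => u * (u ^ 2 + 3) / 3) ((y ^ 2 + 1)) y := by
    have : HasDerivAt (fun u : ℝ => u * (u ^ 2 + 3)) (1 * (y ^ 2 + 3) + y * (2 * y)) y := by
      exact (hasDerivAt_id y).mul (((hasDerivAt_pow 2 y).add_const 3).congr_deriv (by ring))
    have := this.div_const 3
    exact this.congr_deriv (by ring)
  have := (h3.mul h2)
  have h4 := h1.sub this
  exact h4.congr_deriv (by ring)

private lemma key (x : ℝ) (hx : 0 < x) :
    x * (x ^ 2 + 3) / 3 * Real.exp (-x ^ 2 / 2) ≤ ∫ t in (0:ℝ)..x, Real.exp (-t ^ 2 / 2) := by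
  set F : ℝ → ℝ := fun u => (∫ t in (0:ℝ)..u, Real.exp (-t ^ 2 / 2))
      - u * (u ^ 2 + 3) / 3 * Real.exp (-u ^ 2 / 2) with hF
  have hmono : MonotoneOn F (Set.Ici 0) := by
    apply monotoneOn_of_deriv_nonneg (convex_Ici 0)
    · exact fun u _ => ((hasDerivAt_F u).continuousAt).continuousWithinAt
    · intro u hu
      exact ((hasDerivAt_F u).differentiableAt).differentiableWithinAt
    · intro u hu
      rw [(hasDerivAt_F u).deriv]
      positivity
  have h0 : F 0 = 0 := by simp [hF]
  have := hmono (Set.self_mem_Ici) (Set.mem_Ici.mpr hx.le) hx.le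
  rw [h0] at this
  simpa [hF, sub_nonneg] using this

theorem sq_sub_one_add_le (x : ℝ) (hx : 0 < x) :
    x ^ 2 - 1 + x * Real.exp (-x ^ 2 / 2) / (∫ t in (0 : ℝ)..x, Real.exp (-t ^ 2 / 2)) ≤
      x ^ 2 * (x ^ 2 + 2) / (x ^ 2 + 3) := by
  have hc : Continuous fun t : ℝ => Real.exp (-t ^ 2 / 2) := by continuity
  have hφpos : 0 < ∫ t in (0:ℝ)..x, Real.exp (-t ^ 2 / 2) := by
    apply intervalIntegral.intervalIntegral_pos_of_pos_on (hc.intervalIntegrable 0 x)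
    · intro t _; positivity
    · exact hx
  set φ := ∫ t in (0:ℝ)..x, Real.exp (-t ^ 2 / 2) with hφ
  have hk := key x hx
  have he : 0 < Real.exp (-x ^ 2 / 2) := Real.exp_pos _
  have h1 : x * Real.exp (-x ^ 2 / 2) / φ ≤ 3 / (x ^ 2 + 3) := by
    rw [div_le_div_iff₀ hφpos (by positivity)]
    nlinarith [hk, he.le, hx.le]
  have h2 : x ^ 2 * (x ^ 2 + 2) / (x ^ 2 + 3) = x ^ 2 - 1 + 3 / (x ^ 2 + 3) := by
    field_simp
    ring
  rw [h2]
  linarith
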